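/- Let ℕ = V ∪ W be a partition of ℕ into two disjoint infinite sets, let 𝒜₀ and 𝒜₁ be almost disjoint families of true cardinality 𝔠 consisting of infinite subsets of V and of W respectively, let 𝒞 be a countably infinite subset of 𝒜₀, and let α : 𝒜₀ ∖ 𝒞 → 𝒜₁ be a bijection. Then 𝒜 = {a ∪ α(a) : a ∈ 𝒜₀ ∖ 𝒞} ∪ 𝒞 is an almost disjoint family of true cardinality 𝔠 satisfying cl_{Ψ(𝒜)}(W) ∩ 𝒜 = 𝒜 ∖ 𝒞; in particular, Ψ(𝒜) is not almost-normal. -/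

import Mathlib

open Set

namespace PsiSpace

/-- An (infinite) almost disjoint family of infinite subsets of ℕ. -/
def AlmostDisjoint (𝒜 : Set (Set ℕ)) : Prop :=
  𝒜.Infinite ∧ (∀ a ∈ 𝒜, a.Infinite) ∧
    ∀ a ∈ 𝒜, ∀ b ∈ 𝒜, a ≠ b → (a ∩ b).Finite

/-- A maximal almost disjoint family. -/
def MadFamily (𝒜 : Set (Set ℕ)) : Prop :=
  AlmostDisjoint 𝒜 ∧ ∀ X : Set ℕ, X.Infinite → ∃ a ∈ 𝒜, (a ∩ X).Infinite

/-- 𝒜↾B = {a ∈ 𝒜 : a ∩ B infinite}. -/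
def ADRestrict (𝒜 : Set (Set ℕ)) (B : Set ℕ) : Set (Set ℕ) :=
  {a | a ∈ 𝒜 ∧ (a ∩ B).Infinite}

/-- 𝒜 has true cardinality 𝔠. -/
def TrueCardContinuum (𝒜 : Set (Set ℕ)) : Prop :=
  ∀ B : Set ℕ, (ADRestrict 𝒜 B).Finite ∨ Cardinal.mk ↥(ADRestrict 𝒜 B) = Cardinal.continuum

/-- The underlying set of the Mrówka–Isbell space Ψ(𝒜): ℕ together with the members of 𝒜. -/
def Psi (𝒜 : Set (Set ℕ)) : Type := ℕ ⊕ {a : Set ℕ // a ∈ 𝒜}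

/-- The isolated point of Ψ(𝒜) corresponding to n ∈ ℕ. -/
def Psi.nat {𝒜 : Set (Set ℕ)} (n : ℕ) : Psi 𝒜 := Sum.inl n

/-- The point of Ψ(𝒜) corresponding to a ∈ 𝒜. -/
def Psi.pt {𝒜 : Set (Set ℕ)} (a : {a : Set ℕ // a ∈ 𝒜}) : Psi 𝒜 := Sum.inr a

/-- The Mrówka–Isbell topology: each n ∈ ℕ is isolated, and basic neighbourhoods of a ∈ 𝒜
are {a} ∪ (a \ F) for F finite. Equivalently, U is open iff for every a ∈ 𝒜 with a ∈ U,
all but finitely many elements of a belong to U. -/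
instance psiTop (𝒜 : Set (Set ℕ)) : TopologicalSpace (Psi 𝒜) where
  IsOpen U := ∀ a : {a : Set ℕ // a ∈ 𝒜}, Psi.pt a ∈ U →
    {n : ℕ | n ∈ a.1 ∧ Psi.nat n ∉ U}.Finite
  isOpen_univ := fun a _ => by
    convert Set.finite_empty using 1
    ext n
    simp [Set.mem_univ]
  isOpen_inter := fun U V hU hV a ha => by
    refine ((hU a ha.1).union (hV a ha.2)).subset ?_
    rintro n ⟨hn, hnUV⟩
    by_cases h : Psi.nat n ∈ U
    · exact Or.inr ⟨hn, fun h' => hnUV ⟨h, h'⟩⟩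
    · exact Or.inl ⟨hn, h⟩
  isOpen_sUnion := fun S hS a ha => by
    obtain ⟨U, hUS, haU⟩ := ha
    exact (hS U hUS a haU).subset fun n hn => ⟨hn.1, fun h => hn.2 ⟨U, hUS, h⟩⟩

/-- The copy of a set W ⊆ ℕ inside Ψ(𝒜). -/
def PsiNat (𝒜 : Set (Set ℕ)) (W : Set ℕ) : Set (Psi 𝒜) := {x | ∃ n ∈ W, x = Psi.nat n}

/-- The copy of a subfamily 𝒞 ⊆ 𝒜 inside Ψ(𝒜). -/
def PsiSub (𝒜 𝒞 : Set (Set ℕ)) : Set (Psi 𝒜) :=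
  {x | ∃ a : {a : Set ℕ // a ∈ 𝒜}, a.1 ∈ 𝒞 ∧ x = Psi.pt a}

/-- A and B are separated by disjoint open sets. -/
def SepOpen {X : Type*} [TopologicalSpace X] (A B : Set X) : Prop :=
  ∃ U V : Set X, IsOpen U ∧ IsOpen V ∧ A ⊆ U ∧ B ⊆ V ∧ Disjoint U V

/-- Regular closed (closed domain): A is the closure of its interior. -/
def RegClosed {X : Type*} [TopologicalSpace X] (A : Set X) : Prop :=
  closure (interior A) = A

/-- π-closed: a finite intersection of regular closed sets. -/
def PiClosed {X : Type*} [TopologicalSpace X] (A : Set X) : Prop :=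
  ∃ S : Finset (Set X), (∀ B ∈ S, RegClosed B) ∧ A = ⋂₀ ↑S

/-- A is an intersection of at most n regular closed sets. -/
def InterOfAtMost {X : Type*} [TopologicalSpace X] (n : ℕ) (A : Set X) : Prop :=
  ∃ S : Finset (Set X), S.card ≤ n ∧ (∀ B ∈ S, RegClosed B) ∧ A = ⋂₀ ↑S

/-- Almost-normal: disjoint closed + regular closed sets are separated. -/
def AlmostNormal (X : Type*) [TopologicalSpace X] : Prop :=
  ∀ A B : Set X, IsClosed A → RegClosed B → Disjoint A B → SepOpen A B

/-- π-normal: disjoint closed + π-closed sets are separated. -/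
def PiNormal (X : Type*) [TopologicalSpace X] : Prop :=
  ∀ A B : Set X, IsClosed A → PiClosed B → Disjoint A B → SepOpen A B

/-- Quasi-normal: disjoint π-closed sets are separated. -/
def QuasiNormal (X : Type*) [TopologicalSpace X] : Prop :=
  ∀ A B : Set X, PiClosed A → PiClosed B → Disjoint A B → SepOpen A B

/-- Mildly-normal: disjoint regular closed sets are separated. -/
def MildlyNormal (X : Type*) [TopologicalSpace X] : Prop :=
  ∀ A B : Set X, RegClosed A → RegClosed B → Disjoint A B → SepOpen A B

/-- Partly-normal: disjoint regular closed + π-closed sets are separated. -/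
def PartlyNormal (X : Type*) [TopologicalSpace X] : Prop :=
  ∀ A B : Set X, RegClosed A → PiClosed B → Disjoint A B → SepOpen A B

/-- n-partly-normal: disjoint regular closed + (intersection of at most n regular closed)
sets are separated. -/
def NPartlyNormal (n : ℕ) (X : Type*) [TopologicalSpace X] : Prop :=
  ∀ A B : Set X, RegClosed A → InterOfAtMost n B → Disjoint A B → SepOpen A B

/-- 𝓘⁺(𝒜): the sets B ⊆ ℕ with 𝒜↾B infinite. -/
def IPlus (𝒜 : Set (Set ℕ)) : Set (Set ℕ) := {B | (ADRestrict 𝒜 B).Infinite}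

/-- Completely separable almost disjoint family. -/
def CompletelySeparable (𝒜 : Set (Set ℕ)) : Prop :=
  ∀ B ∈ IPlus 𝒜, ∃ a ∈ 𝒜, a ⊆ B

/-- A Luzin family: it can be enumerated as ⟨a_α : α < ω₁⟩ so that for each α < ω₁ and
n ∈ ℕ, the set {β < α : a_α ∩ a_β ⊆ n} is finite. -/
def LuzinFamily (𝒜 : Set (Set ℕ)) : Prop :=
  ∃ a : Ordinal.{0} → Set ℕ,
    (∀ α, α < (Cardinal.aleph 1).ord → a α ∈ 𝒜) ∧
    (∀ x ∈ 𝒜, ∃ α, α < (Cardinal.aleph 1).ord ∧ a α = x) ∧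
    (∀ α, α < (Cardinal.aleph 1).ord → ∀ β, β < (Cardinal.aleph 1).ord → α ≠ β → a α ≠ a β) ∧
    ∀ α, α < (Cardinal.aleph 1).ord → ∀ n : ℕ,
      {β : Ordinal.{0} | β < α ∧ a α ∩ a β ⊆ Set.Iio n}.Finite

/-- Strongly ℵ₀-separated almost disjoint family. -/
def StronglyAleph0Separated (𝒜 : Set (Set ℕ)) : Prop :=
  ∀ A B : Set (Set ℕ), A ⊆ 𝒜 → B ⊆ 𝒜 → A.Countable → A.Infinite →
    B.Countable → B.Infinite → Disjoint A B →
    ∃ X : Set ℕ,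
      (∀ a ∈ 𝒜, (a \ X).Finite ∨ (a ∩ X).Finite) ∧
      (∀ a ∈ A, (a \ X).Finite) ∧
      (∀ a ∈ B, (a ∩ X).Finite)

section Helpers

variable {𝒜 : Set (Set ℕ)}

lemma nat_ne_pt (n : ℕ) (a : {a : Set ℕ // a ∈ 𝒜}) : (Psi.nat n : Psi 𝒜) ≠ Psi.pt a := by
  simp [Psi.nat, Psi.pt]
  exact Sum.inl_ne_inr

lemma pt_inj {a b : {a : Set ℕ // a ∈ 𝒜}} (h : (Psi.pt a : Psi 𝒜) = Psi.pt b) : a = b :=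
  Sum.inr.inj h

lemma psi_isOpen_iff {U : Set (Psi 𝒜)} :
    IsOpen U ↔ ∀ a : {a : Set ℕ // a ∈ 𝒜}, Psi.pt a ∈ U →
      {n : ℕ | n ∈ a.1 ∧ Psi.nat n ∉ U}.Finite := Iff.rfl

lemma isOpen_psiNat (S : Set ℕ) : IsOpen (PsiNat 𝒜 S) := by
  intro a ha
  obtain ⟨n, _, hn⟩ := ha
  exact (nat_ne_pt n a hn.symm).elim

lemma isOpen_basic (a : {a : Set ℕ // a ∈ 𝒜}) {F : Set ℕ} (hF : F.Finite) :
    IsOpen ({Psi.pt a} ∪ {x | ∃ n ∈ a.1 \ F, x = Psi.nat n} : Set (Psi 𝒜)) := by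
  intro b hb
  have hba : b = a := by
    rcases hb with hb | ⟨n, _, hn⟩
    · exact pt_inj hb
    · exact absurd hn.symm (nat_ne_pt n b)
  subst hba
  refine hF.subset ?_
  rintro n ⟨hna, hnU⟩
  by_contra hnF
  exact hnU (Or.inr ⟨n, ⟨hna, hnF⟩, rfl⟩)

lemma mem_closure_psiNat {S : Set ℕ} (a : {a : Set ℕ // a ∈ 𝒜}) :
    Psi.pt a ∈ closure (PsiNat 𝒜 S) ↔ (a.1 ∩ S).Infinite := by
  constructor
  · intro h hfin
    rw [mem_closure_iff] at h
    obtain ⟨x, hxU, hxS⟩ := h _ (isOpen_basic a hfin) (Or.inl rfl)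
    obtain ⟨n, hnS, rfl⟩ := hxS
    rcases hxU with hx | ⟨m, hm, hmx⟩
    · exact nat_ne_pt n a hx
    · have : m = n := Sum.inl.inj hmx.symm
      subst this
      exact hm.2 ⟨hm.1, hnS⟩
  · intro hinf
    rw [mem_closure_iff]
    intro o ho hao
    obtain ⟨n, hn⟩ := (hinf.diff (ho a hao)).nonempty
    have hno : Psi.nat n ∈ o := by
      by_contra hc
      exact hn.2 ⟨hn.1.1, hc⟩
    exact ⟨Psi.nat n, hno, n, hn.1.2, rfl⟩

lemma isClosed_psiSub (𝒞' : Set (Set ℕ)) : IsClosed (PsiSub 𝒜 𝒞') := by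
  rw [← isOpen_compl_iff]
  intro b _
  refine Set.finite_empty.subset ?_
  rintro n ⟨-, hn⟩
  obtain ⟨c, -, hc⟩ := not_not.mp hn
  exact nat_ne_pt n c hc

end Helpers

/-- the two-family machine producing a non almost-normal almost disjoint family
of true cardinality 𝔠 with cl(W) ∩ 𝒜 = 𝒜 ∖ 𝒞. -/
theorem machine_not_almostNormal (V W : Set ℕ) (hdis : Disjoint V W)
    (hcover : V ∪ W = Set.univ) (hVinf : V.Infinite) (hWinf : W.Infinite)
    (𝒜₀ 𝒜₁ : Set (Set ℕ)) (h0 : AlmostDisjoint 𝒜₀) (h1 : AlmostDisjoint 𝒜₁)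
    (h0V : ∀ a ∈ 𝒜₀, a ⊆ V) (h1W : ∀ a ∈ 𝒜₁, a ⊆ W)
    (h0c : TrueCardContinuum 𝒜₀) (h1c : TrueCardContinuum 𝒜₁)
    (𝒞 : Set (Set ℕ)) (h𝒞 : 𝒞 ⊆ 𝒜₀) (hcc : 𝒞.Countable) (hci : 𝒞.Infinite)
    (α : Set ℕ → Set ℕ) (hα : Set.BijOn α (𝒜₀ \ 𝒞) 𝒜₁)
    (𝒜 : Set (Set ℕ)) (h𝒜 : 𝒜 = ((fun a => a ∪ α a) '' (𝒜₀ \ 𝒞)) ∪ 𝒞) :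
    AlmostDisjoint 𝒜 ∧ TrueCardContinuum 𝒜 ∧
      closure (PsiNat 𝒜 W) ∩ PsiSub 𝒜 𝒜 = PsiSub 𝒜 (𝒜 \ 𝒞) ∧
      ¬ AlmostNormal (Psi 𝒜) := by
  have hdis' : ∀ {x : ℕ}, x ∈ V → x ∈ W → False := fun hx hy =>
    Set.disjoint_left.mp hdis hx hy
  set f : Set ℕ → Set ℕ := fun a => a ∪ α a with hf
  have hαmem : ∀ a ∈ 𝒜₀ \ 𝒞, α a ∈ 𝒜₁ := fun a ha => hα.mapsTo ha
  have hfV : ∀ a ∈ 𝒜₀ \ 𝒞, f a ∩ V = a := by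
    intro a ha
    apply subset_antisymm
    · rintro x ⟨hx | hx, hxV⟩
      · exact hx
      · exact absurd (h1W _ (hαmem a ha) hx) fun hw => hdis' hxV hw
    · intro x hx; exact ⟨Or.inl hx, h0V a ha.1 hx⟩
  have hfW : ∀ a ∈ 𝒜₀ \ 𝒞, f a ∩ W = α a := by
    intro a ha
    apply subset_antisymm
    · rintro x ⟨hx | hx, hxW⟩
      · exact absurd (h0V a ha.1 hx) fun hv => hdis' hv hxW
      · exact hx
    · intro x hx; exact ⟨Or.inr hx, h1W _ (hαmem a ha) hx⟩
  have hf_inj : Set.InjOn f (𝒜₀ \ 𝒞) := by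
    intro a ha b hb hab
    have := congrArg (· ∩ V) hab
    simpa [hfV a ha, hfV b hb] using this
  have hα1inf : ∀ a ∈ 𝒜₀ \ 𝒞, (α a).Infinite := fun a ha => h1.2.1 _ (hαmem a ha)
  have hmem : ∀ x, x ∈ 𝒜 ↔ (∃ a ∈ 𝒜₀ \ 𝒞, f a = x) ∨ x ∈ 𝒞 := by
    intro x
    rw [h𝒜]
    constructor
    · rintro (⟨a, ha, rfl⟩ | h)
      · exact Or.inl ⟨a, ha, rfl⟩
      · exact Or.inr h
    · rintro (⟨a, ha, rfl⟩ | h)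
      · exact Or.inl ⟨a, ha, rfl⟩
      · exact Or.inr h
  have hC𝒜 : 𝒞 ⊆ 𝒜 := by rw [h𝒜]; exact Set.subset_union_right
  have hAinf : 𝒜.Infinite := hci.mono hC𝒜
  have hAmemInf : ∀ x ∈ 𝒜, x.Infinite := by
    intro x hx
    rcases (hmem x).mp hx with ⟨a, ha, rfl⟩ | hx
    · exact (h0.2.1 a ha.1).mono Set.subset_union_left
    · exact h0.2.1 x (h𝒞 hx)
  have key : ∀ a ∈ 𝒜₀ \ 𝒞, ∀ c ∈ 𝒞, (f a ∩ c).Finite := by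
    intro a ha c hc
    have hsub : f a ∩ c ⊆ a ∩ c := by
      rintro z ⟨hz | hz, hzc⟩
      · exact ⟨hz, hzc⟩
      · exact absurd (h0V c (h𝒞 hc) hzc) fun hv => hdis' hv (h1W _ (hαmem a ha) hz)
    exact (h0.2.2 a ha.1 c (h𝒞 hc) fun h => ha.2 (h ▸ hc)).subset hsub
  have hADinter : ∀ x ∈ 𝒜, ∀ y ∈ 𝒜, x ≠ y → (x ∩ y).Finite := by
    intro x hx y hy hxy
    rcases (hmem x).mp hx with ⟨a, ha, rfl⟩ | hxC
    · rcases (hmem y).mp hy with ⟨b, hb, rfl⟩ | hyC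
      · have hab : a ≠ b := fun h => hxy (by rw [h])
        have hsub : f a ∩ f b ⊆ (a ∩ b) ∪ (α a ∩ α b) := by
          rintro z ⟨hza | hza, hzb | hzb⟩
          · exact Or.inl ⟨hza, hzb⟩
          · exact absurd (h0V a ha.1 hza) fun hv => hdis' hv (h1W _ (hαmem b hb) hzb)
          · exact absurd (h0V b hb.1 hzb) fun hv => hdis' hv (h1W _ (hαmem a ha) hza)
          · exact Or.inr ⟨hza, hzb⟩
        have hαab : α a ≠ α b := fun h => hab (hα.injOn ha hb h)
        exact ((h0.2.2 a ha.1 b hb.1 hab).union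
          (h1.2.2 _ (hαmem a ha) _ (hαmem b hb) hαab)).subset hsub
      · exact key a ha y hyC
    · rcases (hmem y).mp hy with ⟨b, hb, rfl⟩ | hyC
      · rw [Set.inter_comm]; exact key b hb x hxC
      · exact h0.2.2 x (h𝒞 hxC) y (h𝒞 hyC) hxy
  have hAD : AlmostDisjoint 𝒜 := ⟨hAinf, hAmemInf, hADinter⟩
  have hupper : ∀ s : Set (Set ℕ), Cardinal.mk ↥s ≤ Cardinal.continuum := by
    intro s
    calc Cardinal.mk ↥s ≤ Cardinal.mk (Set ℕ) := Cardinal.mk_set_le s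
      _ = 2 ^ Cardinal.mk ℕ := Cardinal.mk_set
      _ = Cardinal.continuum := by rw [Cardinal.mk_nat, Cardinal.two_power_aleph0]
  have hTCC : TrueCardContinuum 𝒜 := by
    intro B
    by_cases hS0 : (ADRestrict 𝒜₀ B).Finite
    · by_cases hS1 : (ADRestrict 𝒜₁ B).Finite
      · left
        have hsub : ADRestrict 𝒜 B ⊆
            (f '' ((𝒜₀ \ 𝒞) ∩ (ADRestrict 𝒜₀ B ∪ α ⁻¹' (ADRestrict 𝒜₁ B)))) ∪
              (ADRestrict 𝒜₀ B ∩ 𝒞) := by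
          rintro x ⟨hx𝒜, hxB⟩
          rcases (hmem x).mp hx𝒜 with ⟨a, ha, rfl⟩ | hxC
          · left
            refine ⟨a, ⟨ha, ?_⟩, rfl⟩
            have hun : ((a ∩ B) ∪ (α a ∩ B)).Infinite := by
              refine hxB.mono ?_
              rintro z ⟨hz | hz, hzB⟩
              · exact Or.inl ⟨hz, hzB⟩
              · exact Or.inr ⟨hz, hzB⟩
            rcases Set.infinite_union.mp hun with h | h
            · exact Or.inl ⟨ha.1, h⟩
            · exact Or.inr ⟨hαmem a ha, h⟩
          · exact Or.inr ⟨⟨h𝒞 hxC, hxB⟩, hxC⟩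
        refine (Set.Finite.union ?_ (hS0.inter_of_left _)).subset hsub
        refine Set.Finite.image _ ?_
        have h1' : ((𝒜₀ \ 𝒞) ∩ α ⁻¹' (ADRestrict 𝒜₁ B)).Finite := by
          refine Set.Finite.of_finite_image ?_ (hα.injOn.mono Set.inter_subset_left)
          refine hS1.subset ?_
          rintro y ⟨a, ⟨-, ha⟩, rfl⟩
          exact ha
        refine (hS0.union h1').subset ?_
        rintro a ⟨haC, h | h⟩
        · exact Or.inl h
        · exact Or.inr ⟨haC, h⟩
      · right
        have hc1 : Cardinal.mk ↥(ADRestrict 𝒜₁ B) = Cardinal.continuum :=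
          (h1c B).resolve_left hS1
        refine le_antisymm (hupper _) ?_
        set T := (𝒜₀ \ 𝒞) ∩ α ⁻¹' (ADRestrict 𝒜₁ B) with hT
        have hαT : α '' T = ADRestrict 𝒜₁ B := by
          apply subset_antisymm
          · rintro y ⟨a, ⟨-, ha⟩, rfl⟩; exact ha
          · intro y hy
            obtain ⟨a, ha, rfl⟩ := hα.surjOn hy.1
            exact ⟨a, ⟨ha, hy⟩, rfl⟩
        have hmkT : Cardinal.mk ↥T = Cardinal.continuum := by
          rw [← hc1, ← hαT,
            Cardinal.mk_image_eq_of_injOn _ _ (hα.injOn.mono Set.inter_subset_left)]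
        have hfT : f '' T ⊆ ADRestrict 𝒜 B := by
          rintro x ⟨a, ⟨ha, -, haS1B⟩, rfl⟩
          refine ⟨(hmem _).mpr (Or.inl ⟨a, ha, rfl⟩), ?_⟩
          refine haS1B.mono ?_
          rintro z ⟨hz, hzB⟩; exact ⟨Or.inr hz, hzB⟩
        calc Cardinal.continuum = Cardinal.mk ↥T := hmkT.symm
          _ = Cardinal.mk ↥(f '' T) :=
            (Cardinal.mk_image_eq_of_injOn _ _ (hf_inj.mono Set.inter_subset_left)).symm
          _ ≤ _ := Cardinal.mk_le_mk_of_subset hfT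
    · right
      have hc0 : Cardinal.mk ↥(ADRestrict 𝒜₀ B) = Cardinal.continuum :=
        (h0c B).resolve_left hS0
      refine le_antisymm (hupper _) ?_
      have hdiff : Cardinal.continuum ≤ Cardinal.mk ↥(ADRestrict 𝒜₀ B \ 𝒞) := by
        by_contra hlt
        push_neg at hlt
        have h1' : Cardinal.mk ↥(ADRestrict 𝒜₀ B ∩ 𝒞) < Cardinal.continuum := by
          refine lt_of_le_of_lt ?_ Cardinal.aleph0_lt_continuum
          have hcnt : Countable ↥(ADRestrict 𝒜₀ B ∩ 𝒞) :=
            (hcc.mono Set.inter_subset_right).to_subtype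
          exact Cardinal.mk_le_aleph0
        have hU : ADRestrict 𝒜₀ B ⊆ (ADRestrict 𝒜₀ B \ 𝒞) ∪ (ADRestrict 𝒜₀ B ∩ 𝒞) := by
          intro x hx
          by_cases h : x ∈ 𝒞
          · exact Or.inr ⟨hx, h⟩
          · exact Or.inl ⟨hx, h⟩
        have hle := (Cardinal.mk_le_mk_of_subset hU).trans (Cardinal.mk_union_le _ _)
        rw [hc0] at hle
        exact absurd hle
          (not_le.mpr (Cardinal.add_lt_of_lt Cardinal.aleph0_le_continuum hlt h1'))
      have hsubset : f '' (ADRestrict 𝒜₀ B \ 𝒞) ⊆ ADRestrict 𝒜 B := by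
        rintro x ⟨a, ⟨⟨ha0, haB⟩, haC⟩, rfl⟩
        have ha' : a ∈ 𝒜₀ \ 𝒞 := ⟨ha0, haC⟩
        refine ⟨(hmem _).mpr (Or.inl ⟨a, ha', rfl⟩), haB.mono ?_⟩
        rintro z ⟨hz, hzB⟩; exact ⟨Or.inl hz, hzB⟩
      have hinjD : Set.InjOn f (ADRestrict 𝒜₀ B \ 𝒞) := by
        refine hf_inj.mono ?_
        rintro a ⟨⟨ha0, -⟩, haC⟩
        exact ⟨ha0, haC⟩
      calc Cardinal.continuum ≤ Cardinal.mk ↥(ADRestrict 𝒜₀ B \ 𝒞) := hdiff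
        _ = Cardinal.mk ↥(f '' (ADRestrict 𝒜₀ B \ 𝒞)) :=
          (Cardinal.mk_image_eq_of_injOn _ _ hinjD).symm
        _ ≤ _ := Cardinal.mk_le_mk_of_subset hsubset
  have hclW : closure (PsiNat 𝒜 W) ∩ PsiSub 𝒜 𝒜 = PsiSub 𝒜 (𝒜 \ 𝒞) := by
    ext x
    constructor
    · rintro ⟨hxc, a, -, rfl⟩
      have hinf := (mem_closure_psiNat a).mp hxc
      refine ⟨a, ⟨a.2, ?_⟩, rfl⟩
      intro haC
      refine hinf (Set.finite_empty.subset ?_)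
      rintro z ⟨hz, hzW⟩
      exact (hdis' (h0V _ (h𝒞 haC) hz) hzW).elim
    · rintro ⟨a, ⟨ha𝒜, haC⟩, rfl⟩
      refine ⟨?_, a, ha𝒜, rfl⟩
      rw [mem_closure_psiNat]
      rcases (hmem a.1).mp ha𝒜 with ⟨b, hb, hba⟩ | h
      · have heq : a.1 ∩ W = α b := by rw [← hba]; exact hfW b hb
        rw [heq]; exact hα1inf b hb
      · exact absurd h haC
  refine ⟨hAD, hTCC, hclW, ?_⟩
  intro hAN
  have hreg : RegClosed (closure (PsiNat 𝒜 W)) := by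
    refine subset_antisymm (closure_minimal interior_subset isClosed_closure)
      (closure_mono ?_)
    exact interior_maximal subset_closure (isOpen_psiNat W)
  have hdisAB : Disjoint (PsiSub 𝒜 𝒞) (closure (PsiNat 𝒜 W)) := by
    rw [Set.disjoint_left]
    rintro x ⟨a, haC, rfl⟩ hxc
    have hmem' : Psi.pt a ∈ PsiSub 𝒜 (𝒜 \ 𝒞) := by
      rw [← hclW]; exact ⟨hxc, a, a.2, rfl⟩
    obtain ⟨b, hb, hba⟩ := hmem'
    obtain rfl := pt_inj hba
    exact hb.2 haC
  obtain ⟨U, V', hU, hV', hCU, hWV', hUV'⟩ :=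
    hAN (PsiSub 𝒜 𝒞) (closure (PsiNat 𝒜 W)) (isClosed_psiSub 𝒞) hreg hdisAB
  set B₀ : Set ℕ := {n | Psi.nat (𝒜 := 𝒜) n ∈ U} with hB₀
  have hCsub : 𝒞 ⊆ ADRestrict 𝒜 B₀ := by
    intro c hc
    have hc𝒜 : c ∈ 𝒜 := hC𝒜 hc
    have hptU : Psi.pt ⟨c, hc𝒜⟩ ∈ U := hCU ⟨⟨c, hc𝒜⟩, hc, rfl⟩
    have hfin := hU ⟨c, hc𝒜⟩ hptU
    refine ⟨hc𝒜, ?_⟩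
    have hss : c \ {n | n ∈ c ∧ Psi.nat (𝒜 := 𝒜) n ∉ U} ⊆ c ∩ B₀ := by
      rintro n ⟨hn, hn'⟩
      refine ⟨hn, ?_⟩
      by_contra h
      exact hn' ⟨hn, h⟩
    exact ((h0.2.1 c (h𝒞 hc)).diff hfin).mono hss
  have hADinfB : (ADRestrict 𝒜 B₀).Infinite := hci.mono hCsub
  have hcard := (hTCC B₀).resolve_left hADinfB
  have hex : ∃ x ∈ ADRestrict 𝒜 B₀, x ∉ 𝒞 := by
    by_contra h
    push_neg at h
    have hcnt := (hcc.mono h).to_subtype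
    exact absurd (hcard ▸ Cardinal.mk_le_aleph0)
      (not_le.mpr Cardinal.aleph0_lt_continuum)
  obtain ⟨x, ⟨hx𝒜, hxB⟩, hxC⟩ := hex
  have hptV' : Psi.pt ⟨x, hx𝒜⟩ ∈ V' := by
    apply hWV'
    rw [mem_closure_psiNat]
    rcases (hmem x).mp hx𝒜 with ⟨b, hb, hbx⟩ | h
    · have heq : x ∩ W = α b := by rw [← hbx]; exact hfW b hb
      rw [heq]; exact hα1inf b hb
    · exact absurd h hxC
  have hfin := hV' ⟨x, hx𝒜⟩ hptV'
  obtain ⟨n, hn⟩ := (hxB.diff hfin).nonempty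
  have hnV' : Psi.nat (𝒜 := 𝒜) n ∈ V' := by
    by_contra h
    exact hn.2 ⟨hn.1.1, h⟩
  exact Set.disjoint_left.mp hUV' hn.1.2 hnV'


end PsiSpace
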